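/- Let S ⊆ ℝ² be a compact set with path-connected boundary, S = closure(interior(S)), that is θ-biconvex. For any finite set 𝒳ₙ ⊆ S, the Hausdorff distance satisfies d_H(𝔹_θ(𝒳ₙ), 𝔹_θ(S)) ≤ 2√2 · d_H(S, 𝒳ₙ). -/

import Mathlib

noncomputable section

open Set Metric MeasureTheory Filter Real
open scoped RealInnerProductSpace Topology symmDiff

/-- The Euclidean plane. -/
abbrev E2 : Type := EuclideanSpace ℝ (Fin 2)

/-- The line through `p` in direction `v`. -/
def lineThru (p v : E2) : Set E2 := {x | ∃ t : ℝ, x = p + t • v}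

/-- `S` is biconvex with respect to the directions `b₁, b₂`: every section of `S`
along a line in direction `b₁` or `b₂` is convex. -/
def Biconvex (b₁ b₂ : E2) (S : Set E2) : Prop :=
  ∀ p : E2, Convex ℝ (lineThru p b₁ ∩ S) ∧ Convex ℝ (lineThru p b₂ ∩ S)

/-- Open quadrant-cone with vertex `y` and sides in the directions `u, v`
(an open cone of opening angle `π/2` when `u ⊥ v`). -/
def Quadrant (y u v : E2) : Set E2 :=
  {x | ∃ s t : ℝ, 0 < s ∧ 0 < t ∧ x = y + s • u + t • v}

/-- The four open quadrant-cones at `y` with sides parallel to `b₁, b₂`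
(axes `ξ, Rξ, R²ξ, R³ξ` with `ξ = (b₁+b₂)/‖b₁+b₂‖`). -/
def QuadrantCones (b₁ b₂ y : E2) : Set (Set E2) :=
  {Quadrant y b₁ b₂, Quadrant y (-b₁) b₂, Quadrant y b₁ (-b₂), Quadrant y (-b₁) (-b₂)}

/-- First canonical axis rotated counter-clockwise by `θ`. -/
def bvec1 (θ : ℝ) : E2 := (WithLp.equiv 2 (Fin 2 → ℝ)).symm ![Real.cos θ, Real.sin θ]

/-- Second canonical axis rotated counter-clockwise by `θ`. -/
def bvec2 (θ : ℝ) : E2 := (WithLp.equiv 2 (Fin 2 → ℝ)).symm ![-Real.sin θ, Real.cos θ]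

/-- `S` is `θ`-biconvex. -/
def ThetaBiconvex (θ : ℝ) (S : Set E2) : Prop := Biconvex (bvec1 θ) (bvec2 θ) S

/-- The `θ`-biconvex hull: intersection of the complements of all open quadrant-cones
(with sides parallel to the `θ`-rotated axes) that do not meet `A`. -/
def BHull (θ : ℝ) (A : Set E2) : Set E2 :=
  ⋂₀ {T | ∃ y C, C ∈ QuadrantCones (bvec1 θ) (bvec2 θ) y ∧ C ∩ A = ∅ ∧ T = Cᶜ}

/-- Erosion `A ⊖ B(0,r)`. -/
def Erosion (A : Set E2) (r : ℝ) : Set E2 :=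
  ⋃ x ∈ {x : E2 | closedBall x r ⊆ A}, closedBall x r

section seg
variable {S : Set E2} {c : E2}

/-- Every point of a compact set with convex line-sections reaches the frontier
along direction `c`. -/
lemma reach_frontier (hS : IsCompact S) (hc : ‖c‖ = 1)
    (hconv : ∀ p : E2, Convex ℝ (lineThru p c ∩ S)) {s : E2} (hs : s ∈ S) :
    ∃ b : ℝ, 0 ≤ b ∧ s + b • c ∈ frontier S ∧ ∀ t ∈ Icc (0:ℝ) b, s + t • c ∈ S := by
  set I : Set ℝ := {t : ℝ | s + t • c ∈ S} with hI
  have h0 : (0:ℝ) ∈ I := by simp [hI, hs]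
  have hmem : ∀ t ∈ I, s + t • c ∈ lineThru s c ∩ S := fun t ht => ⟨⟨t, rfl⟩, ht⟩
  have hIconv : Convex ℝ I := by
    intro t₁ h₁ t₂ h₂ a b ha hb hab
    have := hconv s (hmem t₁ h₁) (hmem t₂ h₂) ha hb hab
    have he : a • (s + t₁ • c) + b • (s + t₂ • c) = s + (a * t₁ + b * t₂) • c := by
      rw [smul_add, smul_add, smul_smul, smul_smul, ← add_assoc]
      rw [add_right_comm (a • s), ← add_smul, hab, one_smul, add_assoc, ← add_smul]
    rw [he] at this
    exact this.2
  have hIclosed : IsClosed I := by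
    have : Continuous fun t : ℝ => s + t • c := by continuity
    exact hS.isClosed.preimage this
  have hIbdd : BddAbove I := by
    obtain ⟨r, hr⟩ := hS.isBounded.subset_closedBall s
    refine ⟨r, fun t ht => ?_⟩
    have := hr ht
    rw [mem_closedBall, dist_eq_norm, add_sub_cancel_left, norm_smul, hc, mul_one] at this
    exact (le_abs_self t).trans this
  set b := sSup I with hb
  have hbI : b ∈ I := hIclosed.csSup_mem ⟨0, h0⟩ hIbdd
  have hb0 : 0 ≤ b := le_csSup hIbdd h0
  refine ⟨b, hb0, ?_, ?_⟩
  · rw [hS.isClosed.frontier_eq]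
    refine ⟨hbI, fun hint => ?_⟩
    rw [mem_interior_iff_mem_nhds, Metric.mem_nhds_iff] at hint
    obtain ⟨ε, hε, hball⟩ := hint
    have : b + ε/2 ∈ I := by
      have : s + (b + ε/2) • c ∈ ball (s + b • c) ε := by
        rw [mem_ball, dist_eq_norm]
        have : s + (b + ε/2) • c - (s + b • c) = (ε/2) • c := by
          rw [add_smul]; abel
        rw [this, norm_smul, hc, mul_one]
        rw [Real.norm_eq_abs, abs_of_pos (by linarith)]; linarith
      exact hball this
    have := le_csSup hIbdd this
    linarith
  · intro t ht
    have : t ∈ I := hIconv.ordConnected.out h0 hbI ⟨ht.1, ht.2⟩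
    exact this

lemma preconnected_of_biconvex (hS : IsCompact S) (hc : ‖c‖ = 1)
    (hconv : ∀ p : E2, Convex ℝ (lineThru p c ∩ S))
    (hbd : IsPathConnected (frontier S)) : IsPreconnected S := by
  obtain ⟨x₀, hx₀⟩ := hbd.isConnected.nonempty
  have hfrS : frontier S ⊆ S := hS.isClosed.frontier_subset
  apply isPreconnected_of_forall x₀
  intro y hy
  obtain ⟨b, hb0, hfr, hseg⟩ := reach_frontier hS hc hconv hy
  refine ⟨(fun t : ℝ => y + t • c) '' Icc 0 b ∪ frontier S, ?_, Or.inr hx₀, ?_, ?_⟩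
  · rintro z (⟨t, ht, rfl⟩ | hz)
    · exact hseg t ht
    · exact hfrS hz
  · exact Or.inl ⟨0, ⟨le_refl _, hb0⟩, by simp⟩
  · refine IsPreconnected.union (y + b • c) ⟨b, ⟨hb0, le_refl _⟩, rfl⟩ hfr
      ((isPreconnected_Icc).image _ (Continuous.continuousOn (by continuity)))
      hbd.isConnected.isPreconnected
end seg

section core
variable {S : Set E2} {c₁ c₂ : E2} {x : E2} {ε₁ ε₂ : ℝ}

lemma core_lemma (hpre : IsPreconnected S)
    (hV : ∀ z ∈ S, ⟪z - x, c₁⟫ = 0 → 0 < ε₂ * ⟪z - x, c₂⟫)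
    (hH : ∀ z ∈ S, ⟪z - x, c₂⟫ = 0 → 0 < ε₁ * ⟪z - x, c₁⟫)
    (he₁ : ε₁ ≠ 0) (he₂ : ε₂ ≠ 0)
    (hP : ∃ a ∈ S, 0 ≤ ε₁ * ⟪a - x, c₁⟫ ∧ 0 ≤ ε₂ * ⟪a - x, c₂⟫)
    (hM : ∃ b ∈ S, ε₁ * ⟪b - x, c₁⟫ ≤ 0 ∧ ε₂ * ⟪b - x, c₂⟫ ≤ 0) : False := by
  set f : E2 → ℝ := fun z => ε₁ * ⟪z - x, c₁⟫ with hf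
  set g : E2 → ℝ := fun z => ε₂ * ⟪z - x, c₂⟫ with hg
  have hfc : Continuous f :=
    continuous_const.mul (Continuous.inner (continuous_id.sub continuous_const) continuous_const)
  have hgc : Continuous g :=
    continuous_const.mul (Continuous.inner (continuous_id.sub continuous_const) continuous_const)
  set U : Set E2 := {z | f z < 0 ∧ g z < 0} with hU
  set V : Set E2 := {z | 0 < f z ∨ 0 < g z} with hV'
  have hUopen : IsOpen U := by
    have h1 : IsOpen {z | f z < 0} := isOpen_lt hfc continuous_const
    have h2 : IsOpen {z | g z < 0} := isOpen_lt hgc continuous_const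
    exact (h1.inter h2 : _)
  have hVopen : IsOpen V := by
    have h1 : IsOpen {z | (0:ℝ) < f z} := isOpen_lt continuous_const hfc
    have h2 : IsOpen {z | (0:ℝ) < g z} := isOpen_lt continuous_const hgc
    exact (h1.union h2 : _)
  have hfz : ∀ z ∈ S, f z = 0 → 0 < g z := by
    intro z hz h0
    have : ⟪z - x, c₁⟫ = 0 := by
      rcases mul_eq_zero.mp h0 with h | h
      · exact absurd h he₁
      · exact h
    exact hV z hz this
  have hgz : ∀ z ∈ S, g z = 0 → 0 < f z := by
    intro z hz h0
    have : ⟪z - x, c₂⟫ = 0 := by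
      rcases mul_eq_zero.mp h0 with h | h
      · exact absurd h he₂
      · exact h
    exact hH z hz this
  have hcover : S ⊆ U ∪ V := by
    intro z hz
    rcases lt_trichotomy (f z) 0 with hf1 | hf1 | hf1
    · rcases lt_trichotomy (g z) 0 with hg1 | hg1 | hg1
      · exact Or.inl ⟨hf1, hg1⟩
      · exact absurd (hgz z hz hg1) (by linarith)
      · exact Or.inr (Or.inr hg1)
    · exact Or.inr (Or.inr (hfz z hz hf1))
    · exact Or.inr (Or.inl hf1)
  have hSU : (S ∩ U).Nonempty := by
    obtain ⟨b, hbS, hb1, hb2⟩ := hM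
    have hb1' : f b ≤ 0 := hb1
    have hb2' : g b ≤ 0 := hb2
    rcases eq_or_lt_of_le hb1' with h1 | h1
    · exact absurd (hfz b hbS h1) (by linarith)
    · rcases eq_or_lt_of_le hb2' with h2 | h2
      · exact absurd (hgz b hbS h2) (by linarith)
      · exact ⟨b, hbS, h1, h2⟩
  have hSV : (S ∩ V).Nonempty := by
    obtain ⟨a, haS, ha1, ha2⟩ := hP
    have ha1' : 0 ≤ f a := ha1
    rcases eq_or_lt_of_le ha1' with h1 | h1
    · exact ⟨a, haS, Or.inr (hfz a haS h1.symm)⟩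
    · exact ⟨a, haS, Or.inl h1⟩
  obtain ⟨z, _, hzU, hzV⟩ := hpre U V hUopen hVopen hcover hSU hSV
  rcases hzV with h | h
  · exact absurd hzU.1 (by linarith)
  · exact absurd hzU.2 (by linarith)
end core

section sign
variable {S : Set E2} {c₁ c₂ : E2} {x : E2}

lemma line_sign (hconv : ∀ p : E2, Convex ℝ (lineThru p c₂ ∩ S))
    (hspan : ∀ z : E2, z = ⟪z, c₁⟫ • c₁ + ⟪z, c₂⟫ • c₂) (hx : x ∉ S) :
    ∃ ε : ℝ, (ε = 1 ∨ ε = -1) ∧ ∀ z ∈ S, ⟪z - x, c₁⟫ = 0 → 0 < ε * ⟪z - x, c₂⟫ := by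
  have hline : ∀ z, ⟪z - x, c₁⟫ = 0 → z = x + ⟪z - x, c₂⟫ • c₂ := by
    intro z h0
    have := hspan (z - x)
    rw [h0, zero_smul, zero_add] at this
    rw [← this]; abel
  have hzero : ∀ z ∈ S, ⟪z - x, c₁⟫ = 0 → ⟪z - x, c₂⟫ ≠ 0 := by
    intro z hz h0 hv
    have := hline z h0
    rw [hv, zero_smul, add_zero] at this
    exact hx (this ▸ hz)
  by_cases hpos : ∃ z ∈ S, ⟪z - x, c₁⟫ = 0 ∧ ⟪z - x, c₂⟫ < 0
  · obtain ⟨z₂, hz₂S, hz₂0, hz₂v⟩ := hpos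
    refine ⟨-1, Or.inr rfl, fun z hz h0 => ?_⟩
    set v := ⟪z - x, c₂⟫ with hv
    set v₂ := ⟪z₂ - x, c₂⟫ with hv₂
    by_contra hcon
    push_neg at hcon
    have hvne : v ≠ 0 := hzero z hz h0
    have hvpos : 0 < v := by
      rcases lt_trichotomy v 0 with h | h | h
      · nlinarith
      · exact absurd h hvne
      · exact h
    set D := v - v₂ with hD
    have hDpos : 0 < D := by rw [hD]; linarith
    set a := v / D with ha
    set b := -v₂ / D with hb
    have hapos : 0 ≤ a := le_of_lt (div_pos hvpos hDpos)
    have hbpos : 0 ≤ b := le_of_lt (div_pos (by linarith) hDpos)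
    have hDne : D ≠ 0 := ne_of_gt hDpos
    have hab : a + b = 1 := by
      rw [ha, hb]; field_simp; rw [hD]; ring
    have hz₂e : z₂ = x + v₂ • c₂ := hline z₂ hz₂0
    have hze : z = x + v • c₂ := hline z h0
    have hcombo : a • z₂ + b • z = x := by
      rw [hz₂e, hze, smul_add, smul_add, smul_smul, smul_smul]
      have hcoef : a * v₂ + b * v = 0 := by
        rw [ha, hb]; field_simp; ring
      rw [add_add_add_comm, ← add_smul, ← add_smul, hab, hcoef, one_smul, zero_smul, add_zero]
    have := hconv x ⟨⟨v₂, hz₂e⟩, hz₂S⟩ ⟨⟨v, hze⟩, hz⟩ hapos hbpos hab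
    rw [hcombo] at this
    exact hx this.2
  · push_neg at hpos
    refine ⟨1, Or.inl rfl, fun z hz h0 => ?_⟩
    rw [one_mul]
    rcases lt_trichotomy (⟪z - x, c₂⟫) 0 with h | h | h
    · exact absurd (hpos z hz h0) (not_le.mpr h)
    · exact absurd h (hzero z hz h0)
    · exact h

lemma quadrant_miss (hpre : IsPreconnected S)
    (hspan : ∀ z : E2, z = ⟪z, c₁⟫ • c₁ + ⟪z, c₂⟫ • c₂)
    (hbc1 : ∀ p : E2, Convex ℝ (lineThru p c₁ ∩ S))
    (hbc2 : ∀ p : E2, Convex ℝ (lineThru p c₂ ∩ S)) (hx : x ∉ S) :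
    ∃ ε₁ ε₂ : ℝ, (ε₁ = 1 ∨ ε₁ = -1) ∧ (ε₂ = 1 ∨ ε₂ = -1) ∧
      ∀ z ∈ S, ¬(0 ≤ ε₁ * ⟪z - x, c₁⟫ ∧ 0 ≤ ε₂ * ⟪z - x, c₂⟫) := by
  have hspan' : ∀ z : E2, z = ⟪z, c₂⟫ • c₂ + ⟪z, c₁⟫ • c₁ := by
    intro z; rw [add_comm]; exact hspan z
  obtain ⟨ε₂, hε₂, hV⟩ := line_sign hbc2 hspan hx
  obtain ⟨ε₁, hε₁, hH⟩ := line_sign hbc1 hspan' hx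
  have he₁ : ε₁ ≠ 0 := by rcases hε₁ with h | h <;> rw [h] <;> norm_num
  have he₂ : ε₂ ≠ 0 := by rcases hε₂ with h | h <;> rw [h] <;> norm_num
  by_cases hq : ∀ z ∈ S, ¬(0 ≤ ε₁ * ⟪z - x, c₁⟫ ∧ 0 ≤ ε₂ * ⟪z - x, c₂⟫)
  · exact ⟨ε₁, ε₂, hε₁, hε₂, hq⟩
  by_cases hq' : ∀ z ∈ S, ¬(0 ≤ -ε₁ * ⟪z - x, c₁⟫ ∧ 0 ≤ -ε₂ * ⟪z - x, c₂⟫)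
  · refine ⟨-ε₁, -ε₂, ?_, ?_, hq'⟩
    · rcases hε₁ with h | h <;> rw [h] <;> norm_num
    · rcases hε₂ with h | h <;> rw [h] <;> norm_num
  push_neg at hq hq'
  obtain ⟨a, haS, ha1, ha2⟩ := hq
  obtain ⟨b, hbS, hb1, hb2⟩ := hq'
  exact (core_lemma hpre hV hH he₁ he₂ ⟨a, haS, ha1, ha2⟩
    ⟨b, hbS, by linarith [hb1, neg_mul ε₁ (⟪b - x, c₁⟫)],
      by linarith [hb2, neg_mul ε₂ (⟪b - x, c₂⟫)]⟩).elim
end sign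

lemma pyth (θ : ℝ) : Real.cos θ ^ 2 + Real.sin θ ^ 2 = 1 := by
  rw [← Real.sin_sq_add_cos_sq θ]; ring

lemma inner_b11 (θ : ℝ) : ⟪bvec1 θ, bvec1 θ⟫ = 1 := by
  simp only [PiLp.inner_apply, Fin.sum_univ_two, bvec1, RCLike.inner_apply, conj_trivial]
  simp [PiLp.inner_apply, Fin.sum_univ_two, bvec1, RCLike.inner_apply, conj_trivial]
  nlinarith [pyth θ]

lemma inner_b22 (θ : ℝ) : ⟪bvec2 θ, bvec2 θ⟫ = 1 := by
  simp only [PiLp.inner_apply, Fin.sum_univ_two, bvec2, RCLike.inner_apply, conj_trivial]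
  simp [PiLp.inner_apply, Fin.sum_univ_two, bvec2, RCLike.inner_apply, conj_trivial]
  nlinarith [pyth θ]

lemma inner_b12 (θ : ℝ) : ⟪bvec1 θ, bvec2 θ⟫ = 0 := by
  simp [PiLp.inner_apply, Fin.sum_univ_two, bvec1, bvec2, RCLike.inner_apply, conj_trivial]
  ring

lemma span_b (θ : ℝ) (z : E2) : z = ⟪z, bvec1 θ⟫ • bvec1 θ + ⟪z, bvec2 θ⟫ • bvec2 θ := by
  have h : ∀ i, z i = (⟪z, bvec1 θ⟫ • bvec1 θ + ⟪z, bvec2 θ⟫ • bvec2 θ) i := by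
    intro i
    fin_cases i
    · simp [PiLp.inner_apply, Fin.sum_univ_two, bvec1, bvec2, RCLike.inner_apply,
        conj_trivial, PiLp.add_apply, PiLp.smul_apply, smul_eq_mul]
      linear_combination (-(z 0)) * pyth θ
    · simp [PiLp.inner_apply, Fin.sum_univ_two, bvec1, bvec2, RCLike.inner_apply,
        conj_trivial, PiLp.add_apply, PiLp.smul_apply, smul_eq_mul]
      linear_combination (-(z 1)) * pyth θ
  exact PiLp.ext h

lemma norm_bvec2 (θ : ℝ) : ‖bvec2 θ‖ = 1 := by
  have h := inner_b22 θ
  rw [real_inner_self_eq_norm_mul_norm] at h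
  nlinarith [norm_nonneg (bvec2 θ)]

lemma subset_bhull (θ : ℝ) (A : Set E2) : A ⊆ BHull θ A := by
  intro a ha
  rw [BHull, mem_sInter]
  rintro T ⟨y, C, hC, hCA, rfl⟩
  intro haC
  exact (Set.eq_empty_iff_forall_notMem.mp hCA a) ⟨haC, ha⟩

lemma bhull_mono (θ : ℝ) {A B : Set E2} (h : A ⊆ B) : BHull θ A ⊆ BHull θ B := by
  apply sInter_subset_sInter
  rintro T ⟨y, C, hC, hCB, rfl⟩
  refine ⟨y, C, hC, ?_, rfl⟩
  apply eq_empty_of_subset_empty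
  rw [← hCB]
  exact inter_subset_inter_right _ h

lemma bhull_subset_self (θ : ℝ) (S : Set E2) (hS : IsCompact S)
    (hbd : IsPathConnected (frontier S)) (hbc : ThetaBiconvex θ S) : BHull θ S ⊆ S := by
  intro x hxB
  by_contra hx
  have hpre : IsPreconnected S :=
    preconnected_of_biconvex hS (norm_bvec2 θ) (fun p => (hbc p).2) hbd
  obtain ⟨ε₁, ε₂, hε₁, hε₂, hq⟩ :=
    quadrant_miss hpre (span_b θ) (fun p => (hbc p).1) (fun p => (hbc p).2) hx
  have hε₁sq : ε₁ * ε₁ = 1 := by rcases hε₁ with h | h <;> rw [h] <;> norm_num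
  have hε₂sq : ε₂ * ε₂ = 1 := by rcases hε₂ with h | h <;> rw [h] <;> norm_num
  obtain ⟨w, hw⟩ := hbd.isConnected.nonempty
  have hSne : S.Nonempty := ⟨w, hS.isClosed.frontier_subset hw⟩
  set c₁ := bvec1 θ with hc₁
  set c₂ := bvec2 θ with hc₂
  set g : E2 → ℝ := fun z => max (-(ε₁ * ⟪z - x, c₁⟫)) (-(ε₂ * ⟪z - x, c₂⟫)) with hg
  have hgc : Continuous g := by
    apply Continuous.max
    · exact (continuous_const.mul
        (Continuous.inner (continuous_id.sub continuous_const) continuous_const)).neg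
    · exact (continuous_const.mul
        (Continuous.inner (continuous_id.sub continuous_const) continuous_const)).neg
  obtain ⟨z₀, hz₀S, hmin⟩ := hS.exists_isMinOn hSne hgc.continuousOn
  set δ := g z₀ with hδdef
  have hδ : 0 < δ := by
    have h := hq z₀ hz₀S
    rw [not_and_or] at h
    rcases h with h | h
    · have : 0 < -(ε₁ * ⟪z₀ - x, c₁⟫) := by push_neg at h; linarith
      exact lt_of_lt_of_le this (le_max_left _ _)
    · have : 0 < -(ε₂ * ⟪z₀ - x, c₂⟫) := by push_neg at h; linarith
      exact lt_of_lt_of_le this (le_max_right _ _)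
  have hlow : ∀ z ∈ S, δ ≤ -(ε₁ * ⟪z - x, c₁⟫) ∨ δ ≤ -(ε₂ * ⟪z - x, c₂⟫) := by
    intro z hz
    exact le_max_iff.mp (isMinOn_iff.mp hmin z hz)
  set d₁ : E2 := ε₁ • c₁ with hd₁
  set d₂ : E2 := ε₂ • c₂ with hd₂
  set y : E2 := x - (δ/2) • d₁ - (δ/2) • d₂ with hy
  have hxC : x ∈ Quadrant y d₁ d₂ := by
    refine ⟨δ/2, δ/2, half_pos hδ, half_pos hδ, ?_⟩
    rw [hy]; abel
  have hCdisj : Quadrant y d₁ d₂ ∩ S = ∅ := by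
    rw [Set.eq_empty_iff_forall_notMem]
    rintro z ⟨⟨s, t, hs, ht, hz⟩, hzS⟩
    have hzx : z - x = (s - δ/2) • d₁ + (t - δ/2) • d₂ := by
      rw [hz, hy, sub_smul, sub_smul]; abel
    have hu : ε₁ * ⟪z - x, c₁⟫ = s - δ/2 := by
      rw [hzx, hd₁, hd₂]
      rw [inner_add_left, real_inner_smul_left, real_inner_smul_left,
        real_inner_smul_left, real_inner_smul_left, inner_b11 θ,
        real_inner_comm, inner_b12 θ]
      ring_nf
      nlinarith [hε₁sq]
    have hv : ε₂ * ⟪z - x, c₂⟫ = t - δ/2 := by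
      rw [hzx, hd₁, hd₂]
      rw [inner_add_left, real_inner_smul_left, real_inner_smul_left,
        real_inner_smul_left, real_inner_smul_left, inner_b22 θ, inner_b12 θ]
      ring_nf
      nlinarith [hε₂sq]
    rcases hlow z hzS with h | h
    · rw [hu] at h; linarith
    · rw [hv] at h; linarith
  have hCmem : Quadrant y d₁ d₂ ∈ QuadrantCones c₁ c₂ y := by
    rw [QuadrantCones]
    rcases hε₁ with h | h <;> rcases hε₂ with h' | h' <;>
      rw [hd₁, hd₂, h, h'] <;>
      simp only [one_smul, neg_one_smul, mem_insert_iff, mem_singleton_iff] <;> tauto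
  have := hxB (Quadrant y d₁ d₂)ᶜ ⟨y, Quadrant y d₁ d₂, hCmem, hCdisj, rfl⟩
  exact this hxC

/-- Hausdorff distance bound between the biconvex hull of a
finite sample in `S` and the biconvex hull of `S`. -/
theorem bhull_hausdorff_bound (S : Set E2) (hScomp : IsCompact S)
    (hbd : IsPathConnected (frontier S)) (hreg : S = closure (interior S))
    (θ : ℝ) (hθ : θ ∈ Ico (0 : ℝ) (π / 2)) (hbc : ThetaBiconvex θ S)
    (X : Set E2) (hXS : X ⊆ S) (hXfin : X.Finite) (hXne : X.Nonempty) :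
    hausdorffDist (BHull θ X) (BHull θ S) ≤
      2 * Real.sqrt 2 * hausdorffDist S X := by
  have hBSS : BHull θ S = S :=
    subset_antisymm (bhull_subset_self θ S hScomp hbd hbc) (subset_bhull θ S)
  have hone : (1:ℝ) ≤ 2 * Real.sqrt 2 := by
    nlinarith [Real.sq_sqrt (show (0:ℝ) ≤ 2 by norm_num), Real.sqrt_nonneg 2]
  have hr0 : 0 ≤ 2 * Real.sqrt 2 * hausdorffDist S X :=
    mul_nonneg (by positivity) hausdorffDist_nonneg
  apply hausdorffDist_le_of_mem_dist hr0
  · intro a ha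
    refine ⟨a, bhull_mono θ hXS ha, ?_⟩
    rw [dist_self]; exact hr0
  · intro z hz
    rw [hBSS] at hz
    have hSne : S.Nonempty := hXne.mono hXS
    have hfin : EMetric.hausdorffEdist S X ≠ ⊤ :=
      hausdorffEdist_ne_top_of_nonempty_of_bounded hSne hXne hScomp.isBounded
        (hScomp.isBounded.subset hXS)
    have h1 : infDist z X ≤ hausdorffDist S X := infDist_le_hausdorffDist_of_mem hz hfin
    obtain ⟨p, hpX, hpd⟩ := hXfin.isCompact.exists_infDist_eq_dist hXne z
    refine ⟨p, subset_bhull θ X hpX, ?_⟩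
    rw [← hpd]
    calc infDist z X ≤ hausdorffDist S X := h1
      _ ≤ 2 * Real.sqrt 2 * hausdorffDist S X := by nlinarith [hausdorffDist_nonneg (s := S) (t := X)]
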